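/- In the setting with σ = 2δ even, suppose {p_j}_{j=0}^n and {q_k}_{k=0}^{n+σ} satisfy the alternation conditions p_{n−j}(x_r) = (−1)^r p_j(x_r) and q_{n+σ−k}(y_u) = (−1)^u q_k(y_u) at the nodes. Then for each τ ∈ {0,1}, each 0 ≤ j ≤ n, and every node (x_r, y_u) ∈ S_τ, the polynomial F_j(x,y) = p_{n−j}(x) q_{j+δ}(y) − (−1)^τ p_j(x) q_{n+δ−j}(y) satisfies F_j(x_r, y_u) = 0; i.e., F_j is a bivariate vanishing polynomial for S_τ lying in P_{n+δ}(x,y). -/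
import Mathlib

open Polynomial Finset

noncomputable def toMv2 (i : Fin 2) (f : Polynomial ℝ) : MvPolynomial (Fin 2) ℝ :=
  Polynomial.eval₂ MvPolynomial.C (MvPolynomial.X i) f

lemma eval_toMv2 (i : Fin 2) (f : Polynomial ℝ) (v : Fin 2 → ℝ) :
    MvPolynomial.eval v (toMv2 i f) = f.eval (v i) := by
  unfold toMv2
  rw [Polynomial.hom_eval₂]
  simp [Polynomial.eval₂_eq_eval_map]
  congr 1
  ext a
  simp

lemma td_toMv2 (i : Fin 2) (f : Polynomial ℝ) :
    (toMv2 i f).totalDegree ≤ f.natDegree := by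
  unfold toMv2
  rw [Polynomial.eval₂_eq_sum, Polynomial.sum_def]
  apply (MvPolynomial.totalDegree_finset_sum _ _).trans
  apply Finset.sup_le
  intro e he
  calc (MvPolynomial.C (f.coeff e) * MvPolynomial.X i ^ e).totalDegree
      ≤ (MvPolynomial.C (f.coeff e)).totalDegree + (MvPolynomial.X i ^ e : MvPolynomial (Fin 2) ℝ).totalDegree := MvPolynomial.totalDegree_mul _ _
    _ ≤ e := by simp [MvPolynomial.totalDegree_X_pow]
    _ ≤ f.natDegree := Polynomial.le_natDegree_of_mem_supp e he

theorem F_vanishing (n σ δ τ : ℕ) (hσ : σ = 2 * δ) (hτ : τ ≤ 1)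
    (x y : ℕ → ℝ)
    (hx : ∀ j, j < n → x (j+1) < x j)
    (hy : ∀ j, j < n + σ → y (j+1) < y j)
    (p q : ℕ → Polynomial ℝ)
    (hpdeg : ∀ j, j ≤ n → (p j).natDegree = j)
    (hqdeg : ∀ k, k ≤ n + σ → (q k).natDegree = k)
    (hxalt : ∀ j r, j ≤ n → r ≤ n →
      (p (n - j)).eval (x r) = (-1)^r * (p j).eval (x r))
    (hyalt : ∀ k u, k ≤ n + σ → u ≤ n + σ →
      (q (n + σ - k)).eval (y u) = (-1)^u * (q k).eval (y u))
    (j : ℕ) (hj : j ≤ n) :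
    (toMv2 0 (p (n - j)) * toMv2 1 (q (j + δ)) -
      MvPolynomial.C ((-1 : ℝ)^τ) * (toMv2 0 (p j) * toMv2 1 (q (n + δ - j)))).totalDegree
        ≤ n + δ ∧
    ∀ r u, r ≤ n → u ≤ n + σ → (r + u) % 2 = τ →
      MvPolynomial.eval ![x r, y u]
        (toMv2 0 (p (n - j)) * toMv2 1 (q (j + δ)) -
          MvPolynomial.C ((-1 : ℝ)^τ) * (toMv2 0 (p j) * toMv2 1 (q (n + δ - j)))) = 0 := by
  constructor
  · rw [sub_eq_add_neg, ← neg_mul, ← map_neg]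
    refine (MvPolynomial.totalDegree_add _ _).trans (max_le ?_ ?_)
    · refine (MvPolynomial.totalDegree_mul _ _).trans ?_
      have h1 := (td_toMv2 0 (p (n - j))).trans_eq (hpdeg _ (Nat.sub_le n j))
      have h2 := (td_toMv2 1 (q (j + δ))).trans_eq (hqdeg _ (by omega))
      omega
    · refine (MvPolynomial.totalDegree_mul _ _).trans ?_
      refine (add_le_add (MvPolynomial.totalDegree_C _).le
        ((MvPolynomial.totalDegree_mul _ _))).trans ?_
      have h1 := (td_toMv2 0 (p j)).trans_eq (hpdeg _ hj)
      have h2 := (td_toMv2 1 (q (n + δ - j))).trans_eq (hqdeg _ (by omega))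
      omega
  · intro r u hr hu hru
    have hq' := hyalt (n + δ - j) u (by omega) hu
    have hkey : n + σ - (n + δ - j) = j + δ := by omega
    rw [hkey] at hq'
    have hp' := hxalt j r hj hr
    simp only [map_sub, map_mul, eval_toMv2, MvPolynomial.eval_C,
      Matrix.cons_val_zero, Matrix.cons_val_one, Matrix.head_cons]
    rw [hp', hq']
    have : (-1 : ℝ)^r * ((-1)^u) = (-1)^τ := by
      rw [← pow_add, neg_one_pow_eq_pow_mod_two, hru]
    linear_combination (eval (x r) (p j) * eval (y u) (q (n + δ - j))) * this
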